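/- Let e₁, e₂ ∈ H be unitary tripotents of the spin factor, i.e. {e_j, e_j, x} = x for all x ∈ H (j = 1, 2). Then there exist a ℂ-linear unitary operator U : H → H commuting with the conjugation J (U∘J = J∘U) and a complex number α with |α| = 1 such that α·U(e₁) = e₂. -/

import Mathlib

open scoped InnerProductSpace

/-- The inner product `⟨x|y⟩` of the paper: linear in `x`, conjugate-linear in `y`
(Mathlib's `⟪·,·⟫_ℂ` is conjugate-linear in the first variable). -/
noncomputable def sip {H : Type*} [NormedAddCommGroup H] [InnerProductSpace ℂ H]
    (x y : H) : ℂ := ⟪y, x⟫_ℂ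

/-- The spin factor triple product `{x,y,z} = ⟨x|y⟩z + ⟨z|y⟩x − ⟨x|Jz⟩Jy`
associated with a conjugation `J`. -/
noncomputable def tp {H : Type*} [NormedAddCommGroup H] [InnerProductSpace ℂ H]
    (J : H → H) (x y z : H) : H :=
  sip x y • z + sip z y • x - sip x (J z) • J y

/-- The spin norm `‖x‖_sp = √(⟨x|x⟩ + √(⟨x|x⟩² − |⟨x|Jx⟩|²))`. -/
noncomputable def spNorm {H : Type*} [NormedAddCommGroup H] [InnerProductSpace ℂ H]
    (J : H → H) (x : H) : ℝ :=
  Real.sqrt ((sip x x).re + Real.sqrt ((sip x x).re ^ 2 - ‖sip x (J x)‖ ^ 2))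

/-- Any two unitary tripotents of the spin factor are interchanged by a map of the form
`x ↦ α • U x` with `U` a ℂ-linear unitary commuting with the conjugation and `|α| = 1`. -/
theorem stmt8 {H : Type*} [NormedAddCommGroup H] [InnerProductSpace ℂ H]
    (J : H → H)
    (hJadd : ∀ x y : H, J (x + y) = J x + J y)
    (hJsmul : ∀ (c : ℂ) (x : H), J (c • x) = (starRingEnd ℂ) c • J x)
    (hJiso : ∀ x : H, ‖J x‖ = ‖x‖)
    (hJinv : ∀ x : H, J (J x) = x)
    (e₁ e₂ : H)
    (h₁ : ∀ x : H, tp J e₁ e₁ x = x)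
    (h₂ : ∀ x : H, tp J e₂ e₂ x = x) :
    ∃ (U : H →ₗ[ℂ] H) (α : ℂ), Function.Bijective U ∧
      (∀ x y : H, ⟪U x, U y⟫_ℂ = ⟪x, y⟫_ℂ) ∧
      (∀ x : H, U (J x) = J (U x)) ∧
      ‖α‖ = 1 ∧ α • U e₁ = e₂ := by
  -- basic facts about J
  have hJ0 : J 0 = 0 := by
    have h : J 0 + J 0 = J 0 := by rw [← hJadd]; norm_num
    rwa [add_eq_left] at h
  have hJsub : ∀ x y : H, J (x - y) = J x - J y := by
    intro x y
    have h : J (x - y) + J y = J x := by rw [← hJadd, sub_add_cancel]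
    exact eq_sub_of_add_eq h
  have hre : ∀ x y : H, (⟪J x, J y⟫_ℂ).re = (⟪x, y⟫_ℂ).re := by
    intro x y
    have h1 : ‖J x + J y‖ = ‖x + y‖ := by rw [← hJadd, hJiso]
    have e1 := norm_add_sq (𝕜 := ℂ) (J x) (J y)
    have e2 := norm_add_sq (𝕜 := ℂ) x y
    rw [h1, hJiso, hJiso] at e1
    simp only [RCLike.re_to_complex] at e1 e2
    linarith
  have hJi : ∀ x y : H, ⟪J x, J y⟫_ℂ = ⟪y, x⟫_ℂ := by
    intro x y
    rw [← inner_conj_symm y x]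
    have him : ∀ a b : H, (⟪Complex.I • a, b⟫_ℂ).re = (⟪a, b⟫_ℂ).im := by
      intro a b
      rw [inner_smul_left]
      simp [Complex.mul_re]
    apply Complex.ext
    · rw [Complex.conj_re]
      exact hre x y
    · rw [Complex.conj_im]
      have h1 : Complex.I • J x = J ((-Complex.I) • x) := by
        rw [hJsmul]; simp
      rw [← him (J x) (J y), h1, hre, inner_smul_left]
      simp [Complex.mul_re]
  -- the zero tripotent forces triviality
  have hzero : ∀ e : H, e = 0 → ∀ x : H, tp J e e x = 0 := by
    intro e he x
    subst he
    simp [tp, sip, hJ0]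
  -- key identity : ⟪e, J e⟫ • e = J e
  have key : ∀ e : H, (∀ x, tp J e e x = x) → ⟪e, J e⟫_ℂ • e = J e := by
    intro e h
    have h' := h (J e)
    rw [tp] at h'
    simp only [sip, hJinv] at h'
    rwa [add_sub_cancel_left] at h'
  by_cases he₁ : e₁ = 0
  · refine ⟨LinearMap.id, 1, Function.bijective_id, fun x y => rfl, fun x => rfl, by simp, ?_⟩
    have hall : ∀ x : H, x = 0 := fun x => (h₁ x).symm.trans (hzero e₁ he₁ x)
    rw [hall e₂]
    simp [hall e₁]
  · have main : ∀ e w : H, w ≠ 0 → (∀ x, tp J e e x = x) →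
        (starRingEnd ℂ) ⟪e, J e⟫_ℂ * ⟪e, J e⟫_ℂ = 1 ∧ ⟪e, e⟫_ℂ = 1 := by
      intro e w hw h
      set β : ℂ := ⟪e, J e⟫_ℂ with hβdef
      have hb : β • e = J e := key e h
      have he : e ≠ 0 := by
        intro h0
        have hx := h w
        rw [hzero e h0] at hx
        exact hw hx.symm
      have h1 : ((starRingEnd ℂ) β * β) • e = e := by
        conv_rhs => rw [← hJinv e, ← hb, hJsmul, ← hb, smul_smul]
      have hββ : (starRingEnd ℂ) β * β = 1 := by
        have h2 : ((starRingEnd ℂ) β * β - 1) • e = 0 := by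
          rw [sub_smul, one_smul, h1, sub_self]
        rcases smul_eq_zero.mp h2 with h3 | h3
        · exact sub_eq_zero.mp h3
        · exact absurd h3 he
      refine ⟨hββ, ?_⟩
      have hx := h w
      rw [tp] at hx
      simp only [sip] at hx
      have h4 : ⟪J w, e⟫_ℂ = (starRingEnd ℂ) β * ⟪e, w⟫_ℂ := by
        have h5 : ⟪J w, e⟫_ℂ = ⟪J w, J (J e)⟫_ℂ := by rw [hJinv]
        rw [h5, hJi, ← hb, inner_smul_left]
      rw [h4, ← hb, smul_smul] at hx
      have h6 : (starRingEnd ℂ) β * ⟪e, w⟫_ℂ * β = ⟪e, w⟫_ℂ := by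
        linear_combination ⟪e, w⟫_ℂ * hββ
      rw [h6, add_sub_cancel_right] at hx
      have h7 : (⟪e, e⟫_ℂ - 1) • w = 0 := by
        rw [sub_smul, one_smul, hx, sub_self]
      rcases smul_eq_zero.mp h7 with h8 | h8
      · exact sub_eq_zero.mp h8
      · exact absurd h8 hw
    obtain ⟨hββ₁, hee₁⟩ := main e₁ e₁ he₁ h₁
    obtain ⟨hββ₂, hee₂⟩ := main e₂ e₁ he₁ h₂
    obtain ⟨γ₁, hγ₁⟩ := IsAlgClosed.exists_pow_nat_eq (⟪e₁, J e₁⟫_ℂ) zero_lt_two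
    obtain ⟨γ₂, hγ₂⟩ := IsAlgClosed.exists_pow_nat_eq (⟪e₂, J e₂⟫_ℂ) zero_lt_two
    have hγγ : ∀ γ : ℂ, ((starRingEnd ℂ) γ * γ) ^ 2 = 1 → (starRingEnd ℂ) γ * γ = 1 := by
      intro γ hsq
      have h1 : (starRingEnd ℂ) γ * γ = (Complex.normSq γ : ℂ) :=
        Complex.normSq_eq_conj_mul_self.symm
      rw [h1] at hsq ⊢
      have h2 : (Complex.normSq γ) ^ 2 = 1 := by exact_mod_cast hsq
      have h3 : Complex.normSq γ = 1 := by nlinarith [Complex.normSq_nonneg γ]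
      rw [h3]; norm_num
    have hγγ₁ : (starRingEnd ℂ) γ₁ * γ₁ = 1 := by
      apply hγγ
      have h := hββ₁
      rw [← hγ₁, map_pow] at h
      linear_combination h
    have hγγ₂ : (starRingEnd ℂ) γ₂ * γ₂ = 1 := by
      apply hγγ
      have h := hββ₂
      rw [← hγ₂, map_pow] at h
      linear_combination h
    have habs : ∀ γ : ℂ, (starRingEnd ℂ) γ * γ = 1 → ‖γ‖ = 1 := by
      intro γ h
      have h1 : (Complex.normSq γ : ℂ) = 1 := by
        rw [Complex.normSq_eq_conj_mul_self]; exact h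
      have h2 : Complex.normSq γ = 1 := by exact_mod_cast h1
      rw [Complex.norm_def, h2, Real.sqrt_one]
    have hb₁ : ⟪e₁, J e₁⟫_ℂ • e₁ = J e₁ := key e₁ h₁
    have hb₂ : ⟪e₂, J e₂⟫_ℂ • e₂ = J e₂ := key e₂ h₂
    set u₁ : H := γ₁ • e₁ with hu₁
    set u₂ : H := γ₂ • e₂ with hu₂
    have hJu : ∀ (γ : ℂ) (e : H), γ ^ 2 = ⟪e, J e⟫_ℂ → (starRingEnd ℂ) γ * γ = 1 →
        (⟪e, J e⟫_ℂ • e = J e) → J (γ • e) = γ • e := by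
      intro γ e hsq hγγ' hb
      rw [hJsmul, ← hb, ← hsq, smul_smul]
      congr 1
      calc (starRingEnd ℂ) γ * γ ^ 2 = ((starRingEnd ℂ) γ * γ) * γ := by ring
        _ = γ := by rw [hγγ', one_mul]
    have hJu₁ : J u₁ = u₁ := hJu γ₁ e₁ hγ₁ hγγ₁ hb₁
    have hJu₂ : J u₂ = u₂ := hJu γ₂ e₂ hγ₂ hγγ₂ hb₂
    have huu : ∀ (γ : ℂ) (e : H), (starRingEnd ℂ) γ * γ = 1 → ⟪e, e⟫_ℂ = 1 →
        ⟪γ • e, γ • e⟫_ℂ = 1 := by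
      intro γ e ha hbb
      rw [inner_smul_left, inner_smul_right, hbb, mul_one, ha]
    have huu₁ : ⟪u₁, u₁⟫_ℂ = 1 := huu γ₁ e₁ hγγ₁ hee₁
    have huu₂ : ⟪u₂, u₂⟫_ℂ = 1 := huu γ₂ e₂ hγγ₂ hee₂
    set v : H := u₁ - u₂ with hv
    by_cases hv0 : v = 0
    · refine ⟨LinearMap.id, (starRingEnd ℂ) γ₂ * γ₁, Function.bijective_id,
        fun x y => rfl, fun x => rfl, ?_, ?_⟩
      · rw [norm_mul, Complex.norm_conj, habs γ₂ hγγ₂, habs γ₁ hγγ₁, one_mul]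
      · have h12 : u₁ = u₂ := by
          have := sub_eq_zero.mp hv0
          exact this
        calc ((starRingEnd ℂ) γ₂ * γ₁) • LinearMap.id (R := ℂ) e₁
            = (starRingEnd ℂ) γ₂ • (γ₁ • e₁) := by rw [mul_smul]; rfl
          _ = (starRingEnd ℂ) γ₂ • u₂ := by rw [← hu₁, h12]
          _ = ((starRingEnd ℂ) γ₂ * γ₂) • e₂ := by rw [hu₂, smul_smul]
          _ = e₂ := by rw [hγγ₂, one_smul]
    · have hvv : ⟪v, v⟫_ℂ ≠ 0 := fun h => hv0 (inner_self_eq_zero.mp h)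
      set k : ℂ := 2 / ⟪v, v⟫_ℂ with hk
      have hkconj : (starRingEnd ℂ) k = k := by
        rw [hk, map_div₀, inner_self_conj, map_ofNat]
      have hkv : k * ⟪v, v⟫_ℂ = 2 := div_mul_cancel₀ _ hvv
      have hJv : J v = v := by rw [hv, hJsub, hJu₁, hJu₂]
      have hvJ : ∀ x : H, ⟪v, J x⟫_ℂ = ⟪x, v⟫_ℂ := by
        intro x
        conv_lhs => rw [← hJv]
        rw [hJi]
      set U : H →ₗ[ℂ] H :=
        { toFun := fun x => x - (k * ⟪v, x⟫_ℂ) • v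
          map_add' := by
            intro a b
            simp only [inner_add_right, mul_add, add_smul]
            abel
          map_smul' := by
            intro c a
            simp only [inner_smul_right, RingHom.id_apply, smul_sub, smul_smul]
            ring_nf } with hUdef
      have hU : ∀ x : H, U x = x - (k * ⟪v, x⟫_ℂ) • v := fun x => rfl
      have hUv : ∀ x : H, ⟪v, U x⟫_ℂ = -⟪v, x⟫_ℂ := by
        intro x
        rw [hU, inner_sub_right, inner_smul_right]
        linear_combination (-⟪v, x⟫_ℂ) * hkv
      have hinv : ∀ x : H, U (U x) = x := by
        intro x
        rw [hU (U x), hUv, hU]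
        rw [mul_neg, neg_smul, sub_neg_eq_add, sub_add_cancel]
      have hinner : ∀ x y : H, ⟪U x, U y⟫_ℂ = ⟪x, y⟫_ℂ := by
        intro x y
        rw [hU, hU, inner_sub_left, inner_sub_right, inner_sub_right,
          inner_smul_left, inner_smul_right, inner_smul_left, inner_smul_right,
          map_mul, hkconj, inner_conj_symm x v]
        linear_combination k * ⟪x, v⟫_ℂ * ⟪v, y⟫_ℂ * hkv
      have hcomm : ∀ x : H, U (J x) = J (U x) := by
        intro x
        rw [hU, hU, hJsub, hJsmul, hJv, map_mul, hkconj, inner_conj_symm x v, hvJ]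
      have h12 : ⟪u₁, u₂⟫_ℂ = ⟪u₂, u₁⟫_ℂ := by
        conv_lhs => rw [← hJu₁, ← hJu₂, hJi]
      have hvu : ⟪v, v⟫_ℂ = 2 * ⟪v, u₁⟫_ℂ := by
        simp only [hv, inner_sub_left, inner_sub_right, huu₁, huu₂]
        linear_combination -h12
      have hku : k * ⟪v, u₁⟫_ℂ = 1 := by
        rw [hk]
        field_simp
        linear_combination -hvu
      have hUu : U u₁ = u₂ := by
        rw [hU, hku, one_smul, hv]
        abel
      refine ⟨U, (starRingEnd ℂ) γ₂ * γ₁, Function.Involutive.bijective hinv, hinner, hcomm,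
        ?_, ?_⟩
      · rw [norm_mul, Complex.norm_conj, habs γ₂ hγγ₂, habs γ₁ hγγ₁, one_mul]
      · have hsm : γ₁ • U e₁ = u₂ := by
          rw [← map_smul, ← hu₁, hUu]
        calc ((starRingEnd ℂ) γ₂ * γ₁) • U e₁
            = (starRingEnd ℂ) γ₂ • (γ₁ • U e₁) := by rw [mul_smul]
          _ = (starRingEnd ℂ) γ₂ • u₂ := by rw [hsm]
          _ = ((starRingEnd ℂ) γ₂ * γ₂) • e₂ := by rw [hu₂, smul_smul]
          _ = e₂ := by rw [hγγ₂, one_smul]
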